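/- Let j ≥ 1, N_0 ≥ 0 and N_1, …, N_j ≥ 1 be integers, and set N = N_0 + N_1 + ⋯ + N_j. Then the number of tuples (I_♭, I_♯^{(j)}, I_♯^{(j−1)}, …, I_♯^{(1)}) of pairwise disjoint subsets of {1, …, N} whose union is {1, …, N}, with |I_♭| = N_0, |I_♯^{(i)}| = N_i for each i = 1, …, j, and min(I_♯^{(1)}) > min(I_♯^{(2)}) > ⋯ > min(I_♯^{(j)}), equals N!/(N_0!·∏_{i=1}^j (N_i − 1)!) · ∏_{i=1}^j 1/(N_1 + N_2 + ⋯ + N_i). -/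

import Mathlib

open Finset

/-- Decompositions of `T` into `j` labelled nonempty blocks with sizes `Ns i` and
strictly decreasing minima. -/
def SharpDec (j : ℕ) (Ns : Fin j → ℕ) (T : Finset ℕ) : Type :=
  {c : Fin j → Finset ℕ //
    Finset.univ.biUnion c = T ∧
    (∀ i₁ i₂ : Fin j, i₁ ≠ i₂ → Disjoint (c i₁) (c i₂)) ∧
    (∀ i, (c i).card = Ns i) ∧
    (∀ i₁ i₂ : Fin j, i₁ < i₂ → (c i₂).min < (c i₁).min)}

lemma sharpDec_finite (j : ℕ) (Ns : Fin j → ℕ) (T : Finset ℕ) : Finite (SharpDec j Ns T) := by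
  apply Finite.of_injective
    (fun c : SharpDec j Ns T => (fun i => (⟨c.1 i, Finset.mem_powerset.2 (calc
        c.1 i ⊆ Finset.univ.biUnion c.1 := Finset.subset_biUnion_of_mem c.1 (Finset.mem_univ i)
        _ = T := c.2.1)⟩ : {s // s ∈ T.powerset})))
  intro c₁ c₂ h
  exact Subtype.ext (funext fun i => congrArg Subtype.val (congrFun h i))

lemma subtype_card_finite (T : Finset ℕ) (q : Finset ℕ → Prop) :
    Finite {A : Finset ℕ // A ⊆ T ∧ q A} := by
  apply Finite.of_injective
    (fun A : {A : Finset ℕ // A ⊆ T ∧ q A} => (⟨A.1, Finset.mem_powerset.2 A.2.1⟩ : {s // s ∈ T.powerset}))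
  intro A₁ A₂ h
  simpa [Subtype.ext_iff] using h

lemma nat_card_sigma {ι : Type*} [Fintype ι] (f : ι → Type*) [∀ i, Finite (f i)] :
    Nat.card (Σ i, f i) = ∑ i, Nat.card (f i) := by
  classical
  letI : ∀ i, Fintype (f i) := fun i => Fintype.ofFinite _
  simp [Nat.card_eq_fintype_card, Fintype.card_sigma]

/-- card of subsets of `T` of size `n` containing the fixed element `t ∈ T`. -/
lemma card_subsets_with_elem (T : Finset ℕ) (t : ℕ) (ht : t ∈ T) (n : ℕ) (hn : 1 ≤ n) :
    Nat.card {A : Finset ℕ // A ⊆ T ∧ A.card = n ∧ t ∈ A} = (T.card - 1).choose (n - 1) := by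
  classical
  have e : {A : Finset ℕ // A ⊆ T ∧ A.card = n ∧ t ∈ A} ≃
      {B : Finset ℕ // B ∈ (T.erase t).powersetCard (n - 1)} :=
  { toFun := fun A => ⟨A.1.erase t, by
      rw [Finset.mem_powersetCard]
      exact ⟨Finset.erase_subset_erase t A.2.1, by rw [Finset.card_erase_of_mem A.2.2.2, A.2.2.1]⟩⟩
    invFun := fun B => ⟨insert t B.1, by
      have hB := Finset.mem_powersetCard.1 B.2
      have htB : t ∉ B.1 := fun h => Finset.notMem_erase t T (hB.1 h)
      refine ⟨Finset.insert_subset ht (hB.1.trans (Finset.erase_subset t T)), ?_, Finset.mem_insert_self t B.1⟩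
      rw [Finset.card_insert_of_notMem htB, hB.2]
      omega⟩
    left_inv := fun A => Subtype.ext (Finset.insert_erase A.2.2.2)
    right_inv := fun B => Subtype.ext (by
      have hB := Finset.mem_powersetCard.1 B.2
      have htB : t ∉ B.1 := fun h => Finset.notMem_erase t T (hB.1 h)
      exact Finset.erase_insert htB) }
  rw [Nat.card_congr e]
  have : Nat.card {B : Finset ℕ // B ∈ (T.erase t).powersetCard (n - 1)} =
      ((T.erase t).powersetCard (n - 1)).card := Nat.card_eq_finsetCard _
  rw [this, Finset.card_powersetCard, Finset.card_erase_of_mem ht]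

def Wnum : (j : ℕ) → (Fin j → ℕ) → ℕ
  | 0, _ => 1
  | j+1, Ns => ((∑ i, Ns i) - 1).choose (Ns (Fin.last j) - 1) * Wnum j (Ns ∘ Fin.castSucc)

lemma min_lt_min_iff {s u : Finset ℕ} (hs : s.Nonempty) (hu : u.Nonempty) :
    s.min < u.min ↔ s.min' hs < u.min' hu := by
  rw [← Finset.coe_min' hs, ← Finset.coe_min' hu]
  norm_cast

lemma sigma_sharp_ext {j : ℕ} {Ns' : Fin j → ℕ} {T : Finset ℕ} {P : Finset ℕ → Prop}
    (x y : Σ A : {A : Finset ℕ // P A}, SharpDec j Ns' (T \ A.1))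
    (h1 : x.1.1 = y.1.1) (h2 : x.2.1 = y.2.1) : x = y := by
  rcases x with ⟨⟨A, hA⟩, ⟨c, hc⟩⟩
  rcases y with ⟨⟨A', hA'⟩, ⟨c', hc'⟩⟩
  dsimp at h1 h2
  subst h1; subst h2
  rfl

lemma sharpDec_card : ∀ (j : ℕ) (Ns : Fin j → ℕ), (∀ i, 1 ≤ Ns i) →
    ∀ T : Finset ℕ, T.card = ∑ i, Ns i → Nat.card (SharpDec j Ns T) = Wnum j Ns := by
  intro j
  induction j with
  | zero =>
    intro Ns _ T hT
    have hT0 : T = ∅ := Finset.card_eq_zero.1 (by simpa using hT)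
    haveI : Unique (SharpDec 0 Ns T) :=
    { default := ⟨fun i => i.elim0, by simp [hT0], fun i => i.elim0, fun i => i.elim0,
        fun i => i.elim0⟩
      uniq := fun c => Subtype.ext (funext fun i => i.elim0) }
    simp [Nat.card_unique, Wnum]
  | succ j IH =>
    intro Ns hNs T hT
    classical
    set Ns' : Fin j → ℕ := Ns ∘ Fin.castSucc with hNs'def
    have hTne : T.Nonempty := Finset.card_pos.1 (by
      have h1 := hNs (Fin.last j)
      have : Ns (Fin.last j) ≤ ∑ i, Ns i := Finset.single_le_sum (fun i _ => Nat.zero_le _) (Finset.mem_univ _)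
      omega)
    set t := T.min' hTne with htdef
    have htT : t ∈ T := T.min'_mem hTne
    -- basic facts about elements
    have hsub : ∀ c : SharpDec (j+1) Ns T, ∀ i, c.1 i ⊆ T := fun c i => calc
      c.1 i ⊆ Finset.univ.biUnion c.1 := Finset.subset_biUnion_of_mem c.1 (Finset.mem_univ i)
      _ = T := c.2.1
    have hne : ∀ c : SharpDec (j+1) Ns T, ∀ i, (c.1 i).Nonempty := fun c i =>
      Finset.card_pos.1 (by rw [c.2.2.2.1 i]; exact hNs i)
    have hlast : ∀ c : SharpDec (j+1) Ns T, t ∈ c.1 (Fin.last j) := by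
      intro c
      obtain ⟨i, _, hti⟩ := Finset.mem_biUnion.1 (c.2.1 ▸ htT)
      rcases Fin.eq_castSucc_or_eq_last i with ⟨i', rfl⟩ | rfl
      · exfalso
        have h1 := c.2.2.2.2 i'.castSucc (Fin.last j) (Fin.castSucc_lt_last i')
        rw [min_lt_min_iff (hne c _) (hne c _)] at h1
        have h2 : (c.1 i'.castSucc).min' (hne c _) ≤ t := Finset.min'_le _ t hti
        have h3 : t ≤ (c.1 (Fin.last j)).min' (hne c _) :=
          T.min'_le _ (hsub c _ (Finset.min'_mem _ _))
        omega
      · exact hti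
    have hUfib : ∀ c : SharpDec (j+1) Ns T,
        Finset.univ.biUnion (fun i : Fin j => c.1 i.castSucc) = T \ c.1 (Fin.last j) := by
      intro c
      ext x
      simp only [Finset.mem_biUnion, Finset.mem_univ, true_and, Finset.mem_sdiff]
      constructor
      · rintro ⟨i, hx⟩
        refine ⟨hsub c _ hx, fun hxl => ?_⟩
        exact Finset.disjoint_left.1
          (c.2.2.1 i.castSucc (Fin.last j) (Fin.ne_last_of_lt (Fin.castSucc_lt_last i))) hx hxl
      · rintro ⟨hxT, hxl⟩
        obtain ⟨i, _, hx⟩ := Finset.mem_biUnion.1 (c.2.1 ▸ hxT)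
        rcases Fin.eq_castSucc_or_eq_last i with ⟨i', rfl⟩ | rfl
        · exact ⟨i', hx⟩
        · exact absurd hx hxl
    -- the bijection
    set f : SharpDec (j+1) Ns T → Σ A : {A : Finset ℕ // A ⊆ T ∧ A.card = Ns (Fin.last j) ∧ t ∈ A}, SharpDec j Ns' (T \ A.1) := fun c =>
      ⟨⟨c.1 (Fin.last j), hsub c _, c.2.2.2.1 _, hlast c⟩,
       ⟨fun i => c.1 i.castSucc, hUfib c,
        fun i₁ i₂ hne' => c.2.2.1 _ _ (fun h => hne' (Fin.castSucc_injective _ h)),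
        fun i => c.2.2.2.1 _,
        fun i₁ i₂ h => c.2.2.2.2 _ _ (Fin.castSucc_lt_castSucc_iff.2 h)⟩⟩ with hfdef
    have finj : Function.Injective f := by
      intro c₁ c₂ h
      apply Subtype.ext; funext i
      rcases Fin.eq_castSucc_or_eq_last i with ⟨i', rfl⟩ | rfl
      · exact congrArg (fun x : (Σ A : {A : Finset ℕ // A ⊆ T ∧ A.card = Ns (Fin.last j) ∧ t ∈ A}, SharpDec j Ns' (T \ A.1)) => x.2.1 i') h
      · exact congrArg (fun x : (Σ A : {A : Finset ℕ // A ⊆ T ∧ A.card = Ns (Fin.last j) ∧ t ∈ A}, SharpDec j Ns' (T \ A.1)) => x.1.1) h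
    have fsurj : Function.Surjective f := by
      rintro ⟨⟨A, hAT, hAn, htA⟩, ⟨c, hU, hD, hC, hMn⟩⟩
      have hAne : A.Nonempty := Finset.card_pos.1 (by rw [hAn]; exact hNs _)
      have hcsub : ∀ i, c i ⊆ T \ A := fun i => calc
        c i ⊆ Finset.univ.biUnion c := Finset.subset_biUnion_of_mem c (Finset.mem_univ i)
        _ = T \ A := hU
      have hcne : ∀ i, (c i).Nonempty := fun i => Finset.card_pos.1 (by rw [hC i]; exact hNs _)
      have hminA : A.min' hAne = t := le_antisymm
        (Finset.min'_le A t htA)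
        (T.min'_le _ (hAT (A.min'_mem hAne)))
      have hprops : (Finset.univ.biUnion (Fin.snoc c A : Fin (j+1) → Finset ℕ) = T) ∧
          (∀ i₁ i₂ : Fin (j+1), i₁ ≠ i₂ → Disjoint ((Fin.snoc c A : Fin (j+1) → Finset ℕ) i₁) ((Fin.snoc c A : Fin (j+1) → Finset ℕ) i₂)) ∧
          (∀ i, ((Fin.snoc c A : Fin (j+1) → Finset ℕ) i).card = Ns i) ∧
          (∀ i₁ i₂ : Fin (j+1), i₁ < i₂ →
            ((Fin.snoc c A : Fin (j+1) → Finset ℕ) i₂).min < ((Fin.snoc c A : Fin (j+1) → Finset ℕ) i₁).min) := by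
        refine ⟨?_, ?_, ?_, ?_⟩
        · ext x
          simp only [Finset.mem_biUnion, Finset.mem_univ, true_and]
          constructor
          · rintro ⟨i, hx⟩
            rcases Fin.eq_castSucc_or_eq_last i with ⟨i', rfl⟩ | rfl
            · rw [Fin.snoc_castSucc] at hx
              exact (Finset.mem_sdiff.1 (hcsub i' hx)).1
            · rw [Fin.snoc_last] at hx
              exact hAT hx
          · intro hx
            by_cases hxA : x ∈ A
            · exact ⟨Fin.last j, by rwa [Fin.snoc_last]⟩
            · obtain ⟨i, _, hxi⟩ := Finset.mem_biUnion.1 (hU ▸ Finset.mem_sdiff.2 ⟨hx, hxA⟩)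
              exact ⟨i.castSucc, by rwa [Fin.snoc_castSucc]⟩
        · intro i₁ i₂ hne'
          have hdA : ∀ i : Fin j, Disjoint A (c i) := fun i =>
            Finset.disjoint_sdiff.mono_right (hcsub i)
          rcases Fin.eq_castSucc_or_eq_last i₁ with ⟨k₁, rfl⟩ | rfl <;>
            rcases Fin.eq_castSucc_or_eq_last i₂ with ⟨k₂, rfl⟩ | rfl
          · simpa [Fin.snoc_castSucc] using hD k₁ k₂ (fun h => hne' (by rw [h]))
          · simpa [Fin.snoc_castSucc, Fin.snoc_last] using (hdA k₁).symm
          · simpa [Fin.snoc_castSucc, Fin.snoc_last] using hdA k₂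
          · exact absurd rfl hne'
        · intro i
          rcases Fin.eq_castSucc_or_eq_last i with ⟨i', rfl⟩ | rfl
          · rw [Fin.snoc_castSucc]; exact hC i'
          · rw [Fin.snoc_last]; exact hAn
        · intro i₁ i₂ hlt
          rcases Fin.eq_castSucc_or_eq_last i₂ with ⟨k₂, rfl⟩ | rfl
          · rcases Fin.eq_castSucc_or_eq_last i₁ with ⟨k₁, rfl⟩ | rfl
            · rw [Fin.snoc_castSucc, Fin.snoc_castSucc]
              exact hMn k₁ k₂ (Fin.castSucc_lt_castSucc_iff.1 hlt)
            · exact absurd (hlt.trans_le (Fin.le_last _)) (lt_irrefl _)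
          · rcases Fin.eq_castSucc_or_eq_last i₁ with ⟨k₁, rfl⟩ | rfl
            · rw [Fin.snoc_castSucc, Fin.snoc_last]
              rw [min_lt_min_iff hAne (hcne k₁), hminA]
              have h2 := Finset.mem_sdiff.1 (hcsub k₁ ((c k₁).min'_mem (hcne k₁)))
              have h3 : t ≤ (c k₁).min' (hcne k₁) := T.min'_le _ h2.1
              have h4 : (c k₁).min' (hcne k₁) ≠ t := fun h => h2.2 (by rw [h]; exact htA)
              omega
            · exact absurd hlt (lt_irrefl _)
      refine ⟨⟨Fin.snoc c A, hprops.1, hprops.2.1, hprops.2.2.1, hprops.2.2.2⟩, ?_⟩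
      simp only [hfdef]
      apply sigma_sharp_ext
      · show (Fin.snoc c A : Fin (j+1) → Finset ℕ) (Fin.last j) = A
        exact @Fin.snoc_last j (fun _ => Finset ℕ) A c
      · funext i
        show (Fin.snoc c A : Fin (j+1) → Finset ℕ) i.castSucc = c i
        exact @Fin.snoc_castSucc j (fun _ => Finset ℕ) A c i
    have key : Nat.card (SharpDec (j+1) Ns T) = Nat.card (Σ A : {A : Finset ℕ // A ⊆ T ∧ A.card = Ns (Fin.last j) ∧ t ∈ A}, SharpDec j Ns' (T \ A.1)) :=
      Nat.card_eq_of_bijective f ⟨finj, fsurj⟩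
    letI : Fintype {A : Finset ℕ // A ⊆ T ∧ A.card = Ns (Fin.last j) ∧ t ∈ A} := @Fintype.ofFinite _ (subtype_card_finite T _)
    letI : ∀ A : {A : Finset ℕ // A ⊆ T ∧ A.card = Ns (Fin.last j) ∧ t ∈ A}, Finite (SharpDec j Ns' (T \ A.1)) := fun A => sharpDec_finite _ _ _
    have hsum : ∑ i : Fin j, Ns' i + Ns (Fin.last j) = ∑ i, Ns i := by
      rw [Fin.sum_univ_castSucc (f := Ns)]; rfl
    have hfib : ∀ A : {A : Finset ℕ // A ⊆ T ∧ A.card = Ns (Fin.last j) ∧ t ∈ A}, Nat.card (SharpDec j Ns' (T \ A.1)) = Wnum j Ns' := by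
      intro A
      apply IH Ns' (fun i => hNs _)
      rw [Finset.card_sdiff_of_subset A.2.1, hT, A.2.2.1]
      omega
    have hScard : Nat.card {A : Finset ℕ // A ⊆ T ∧ A.card = Ns (Fin.last j) ∧ t ∈ A} = (T.card - 1).choose (Ns (Fin.last j) - 1) :=
      card_subsets_with_elem T t htT _ (hNs _)
    rw [key, nat_card_sigma]
    simp only [hfib]
    rw [Finset.sum_const, Finset.card_univ, smul_eq_mul]
    rw [← Nat.card_eq_fintype_card, hScard, hT]
    rfl

lemma fin_Iic_last (j : ℕ) : Finset.Iic (Fin.last j) = Finset.univ := by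
  ext i; simp [Fin.le_last]

lemma fin_Iic_castSucc {j : ℕ} (i : Fin j) :
    (Finset.Iic i).map Fin.castSuccEmb = Finset.Iic i.castSucc := by
  ext k
  simp only [Finset.mem_map, Finset.mem_Iic]
  constructor
  · rintro ⟨k', hk', rfl⟩
    exact Fin.castSucc_le_castSucc_iff.2 hk'
  · intro hk
    rcases Fin.eq_castSucc_or_eq_last k with ⟨k', rfl⟩ | rfl
    · exact ⟨k', Fin.castSucc_le_castSucc_iff.1 hk, rfl⟩
    · exact absurd hk (by simp [Fin.lt_iff_le_and_ne, Fin.le_castSucc_iff] at *; omega)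

lemma prod_fact_ne_zero {j : ℕ} (g : Fin j → ℕ) :
    (∏ i, (Nat.factorial (g i) : ℚ)) ≠ 0 :=
  Finset.prod_ne_zero_iff.2 fun i _ => Nat.cast_ne_zero.2 (Nat.factorial_ne_zero _)

set_option maxHeartbeats 1000000 in
lemma wnum_cast : ∀ (j : ℕ) (Ns : Fin j → ℕ), (∀ i, 1 ≤ Ns i) →
    (Wnum j Ns : ℚ) = (Nat.factorial (∑ i, Ns i) : ℚ) / (∏ i, (Nat.factorial (Ns i - 1) : ℚ))
      * ∏ i : Fin j, 1 / (∑ k ∈ Finset.Iic i, (Ns k : ℚ)) := by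
  intro j
  induction j with
  | zero => intro Ns _; simp [Wnum]
  | succ j IH =>
    intro Ns hNs
    have hIH := IH (Ns ∘ Fin.castSucc) (fun i => hNs _)
    simp only [Function.comp] at hIH
    have hM : ∑ i : Fin (j+1), Ns i = (∑ i : Fin j, Ns i.castSucc) + Ns (Fin.last j) :=
      Fin.sum_univ_castSucc Ns
    have hn1 : 1 ≤ Ns (Fin.last j) := hNs _
    have hM1 : 1 ≤ ∑ i : Fin (j+1), Ns i := by omega
    have hchoose : (((∑ i : Fin (j+1), Ns i) - 1).choose (Ns (Fin.last j) - 1) : ℚ)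
        = (Nat.factorial ((∑ i : Fin (j+1), Ns i) - 1) : ℚ) /
          ((Nat.factorial (Ns (Fin.last j) - 1) : ℚ) *
            (Nat.factorial (∑ i : Fin j, Ns i.castSucc) : ℚ)) := by
      have harg : (∑ i : Fin (j+1), Ns i) - 1 - (Ns (Fin.last j) - 1) = ∑ i : Fin j, Ns i.castSucc := by
        omega
      rw [Nat.cast_choose ℚ (by omega : Ns (Fin.last j) - 1 ≤ (∑ i : Fin (j+1), Ns i) - 1), harg]
    have hprodfact : (∏ i : Fin (j+1), (Nat.factorial (Ns i - 1) : ℚ))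
        = (∏ i : Fin j, (Nat.factorial (Ns i.castSucc - 1) : ℚ)) *
          (Nat.factorial (Ns (Fin.last j) - 1) : ℚ) :=
      Fin.prod_univ_castSucc _
    have hsumIic : ∀ i : Fin j, (∑ k ∈ Finset.Iic i.castSucc, (Ns k : ℚ))
        = ∑ k ∈ Finset.Iic i, (Ns k.castSucc : ℚ) := by
      intro i
      rw [← fin_Iic_castSucc i, Finset.sum_map]
      rfl
    have hprodinv : (∏ i : Fin (j+1), 1 / (∑ k ∈ Finset.Iic i, (Ns k : ℚ)))
        = (∏ i : Fin j, 1 / (∑ k ∈ Finset.Iic i, (Ns k.castSucc : ℚ))) *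
          (1 / (∑ i : Fin (j+1), (Ns i : ℚ))) := by
      rw [Fin.prod_univ_castSucc (f := fun i => 1 / (∑ k ∈ Finset.Iic i, (Ns k : ℚ)))]
      rw [fin_Iic_last]
      congr 1
      exact Finset.prod_congr rfl fun i _ => by rw [hsumIic]
    have hWc : (Wnum (j+1) Ns : ℚ)
        = (((∑ i : Fin (j+1), Ns i) - 1).choose (Ns (Fin.last j) - 1) : ℚ) *
          (Wnum j (Ns ∘ Fin.castSucc) : ℚ) := by
      rw [show Wnum (j+1) Ns = ((∑ i, Ns i) - 1).choose (Ns (Fin.last j) - 1) *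
        Wnum j (Ns ∘ Fin.castSucc) from rfl, Nat.cast_mul]
    have hcastsum : (∑ i : Fin (j+1), (Ns i : ℚ)) = ((∑ i : Fin (j+1), Ns i : ℕ) : ℚ) := by
      push_cast; ring
    have hfact : (Nat.factorial (∑ i : Fin (j+1), Ns i) : ℚ)
        = ((∑ i : Fin (j+1), Ns i : ℕ) : ℚ) *
          (Nat.factorial ((∑ i : Fin (j+1), Ns i) - 1) : ℚ) := by
      rw [← Nat.cast_mul, Nat.mul_factorial_pred (by omega)]
    have h1 : ((Nat.factorial (Ns (Fin.last j) - 1) : ℚ)) ≠ 0 :=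
      Nat.cast_ne_zero.2 (Nat.factorial_ne_zero _)
    have h2 : ((Nat.factorial (∑ i : Fin j, Ns i.castSucc) : ℚ)) ≠ 0 :=
      Nat.cast_ne_zero.2 (Nat.factorial_ne_zero _)
    have h3 : (∏ i : Fin j, (Nat.factorial (Ns i.castSucc - 1) : ℚ)) ≠ 0 :=
      prod_fact_ne_zero _
    have h4 : ((∑ i : Fin (j+1), Ns i : ℕ) : ℚ) ≠ 0 := by
      rw [Nat.cast_ne_zero]; omega
    rw [hWc, hchoose, hIH, hprodfact, hprodinv, hcastsum, hfact]
    field_simp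

lemma card_subsets (T : Finset ℕ) (k : ℕ) :
    Nat.card {A : Finset ℕ // A ⊆ T ∧ A.card = k} = T.card.choose k := by
  classical
  have e : {A : Finset ℕ // A ⊆ T ∧ A.card = k} ≃ {A : Finset ℕ // A ∈ T.powersetCard k} :=
    Equiv.subtypeEquivRight (fun A => (Finset.mem_powersetCard).symm)
  rw [Nat.card_congr e, Nat.card_eq_finsetCard, Finset.card_powersetCard]

/-- Counting tuples `(I♭, I♯⁽¹⁾, …, I♯⁽ʲ⁾)` of pairwise disjoint subsets of `{1, …, N}`
whose union is `{1, …, N}`, with prescribed cardinalities `|I♭| = N₀`, `|I♯⁽ⁱ⁾| = Nᵢ`,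
and strictly decreasing minima `min I♯⁽¹⁾ > min I♯⁽²⁾ > ⋯ > min I♯⁽ʲ⁾`
(here `Ns i = N_{i+1}` in 0-based indexing). -/
theorem card_decomposition_types
    (j N0 : ℕ) (hj : 1 ≤ j) (Ns : Fin j → ℕ) (hNs : ∀ i, 1 ≤ Ns i)
    (N : ℕ) (hN : N = N0 + ∑ i, Ns i) :
    (Nat.card {p : Finset ℕ × (Fin j → Finset ℕ) //
        (p.1 ∪ Finset.univ.biUnion p.2 = Finset.Icc 1 N) ∧
        (∀ i, Disjoint p.1 (p.2 i)) ∧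
        (∀ i₁ i₂ : Fin j, i₁ ≠ i₂ → Disjoint (p.2 i₁) (p.2 i₂)) ∧
        p.1.card = N0 ∧
        (∀ i, (p.2 i).card = Ns i) ∧
        (∀ i₁ i₂ : Fin j, i₁ < i₂ → (p.2 i₂).min < (p.2 i₁).min)} : ℚ)
    = (Nat.factorial N : ℚ) /
        ((Nat.factorial N0 : ℚ) * ∏ i, (Nat.factorial (Ns i - 1) : ℚ))
      * ∏ i : Fin j, 1 / (∑ k ∈ Finset.Iic i, (Ns k : ℚ)) := by
  classical
  have hNN0 : N0 ≤ N := by omega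
  have hIcc : (Finset.Icc 1 N).card = N := by rw [Nat.card_Icc]; omega
  set f : {p : Finset ℕ × (Fin j → Finset ℕ) //
        (p.1 ∪ Finset.univ.biUnion p.2 = Finset.Icc 1 N) ∧
        (∀ i, Disjoint p.1 (p.2 i)) ∧
        (∀ i₁ i₂ : Fin j, i₁ ≠ i₂ → Disjoint (p.2 i₁) (p.2 i₂)) ∧
        p.1.card = N0 ∧
        (∀ i, (p.2 i).card = Ns i) ∧
        (∀ i₁ i₂ : Fin j, i₁ < i₂ → (p.2 i₂).min < (p.2 i₁).min)} →
      Σ F : {F : Finset ℕ // F ⊆ Finset.Icc 1 N ∧ F.card = N0},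
        SharpDec j Ns (Finset.Icc 1 N \ F.1) := fun p =>
    ⟨⟨p.1.1, fun x hx => by rw [← p.2.1]; exact Finset.mem_union_left _ hx, p.2.2.2.2.1⟩,
     ⟨p.1.2, by
        ext x
        simp only [Finset.mem_sdiff]
        constructor
        · intro hx
          obtain ⟨i, _, hxi⟩ := Finset.mem_biUnion.1 hx
          refine ⟨by rw [← p.2.1]; exact Finset.mem_union_right _ hx, fun hxF => ?_⟩
          exact Finset.disjoint_left.1 (p.2.2.1 i) hxF hxi
        · rintro ⟨hx, hxF⟩
          rcases Finset.mem_union.1 (by rw [p.2.1]; exact hx :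
            x ∈ p.1.1 ∪ Finset.univ.biUnion p.1.2) with h | h
          · exact absurd h hxF
          · exact h,
      p.2.2.2.1, p.2.2.2.2.2.1, p.2.2.2.2.2.2⟩⟩ with hfdef
  have finj : Function.Injective f := by
    intro p q h
    have h2 := congrArg (fun x : (Σ F : {F : Finset ℕ // F ⊆ Finset.Icc 1 N ∧ F.card = N0},
        SharpDec j Ns (Finset.Icc 1 N \ F.1)) => ((x.1.1 : Finset ℕ), (x.2.1 : Fin j → Finset ℕ))) h
    simp only [hfdef] at h2
    exact Subtype.ext (Prod.ext (congrArg Prod.fst h2) (congrArg Prod.snd h2))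
  have fsurj : Function.Surjective f := by
    rintro ⟨⟨F, hFsub, hFcard⟩, ⟨c, hU, hD, hC, hM⟩⟩
    have hcsub : ∀ i, c i ⊆ Finset.Icc 1 N \ F := fun i => calc
      c i ⊆ Finset.univ.biUnion c := Finset.subset_biUnion_of_mem c (Finset.mem_univ i)
      _ = Finset.Icc 1 N \ F := hU
    refine ⟨⟨(F, c), ?_, ?_, hD, hFcard, hC, hM⟩, ?_⟩
    · show F ∪ Finset.univ.biUnion c = Finset.Icc 1 N
      rw [hU]
      exact Finset.union_sdiff_of_subset hFsub
    · exact fun i => Finset.disjoint_sdiff.mono_right (hcsub i)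
    · simp only [hfdef]
  have key := Nat.card_eq_of_bijective f ⟨finj, fsurj⟩
  letI : Fintype {F : Finset ℕ // F ⊆ Finset.Icc 1 N ∧ F.card = N0} :=
    @Fintype.ofFinite _ (subtype_card_finite _ _)
  letI : ∀ F : {F : Finset ℕ // F ⊆ Finset.Icc 1 N ∧ F.card = N0},
      Finite (SharpDec j Ns (Finset.Icc 1 N \ F.1)) := fun F => sharpDec_finite _ _ _
  have hfib : ∀ F : {F : Finset ℕ // F ⊆ Finset.Icc 1 N ∧ F.card = N0},
      Nat.card (SharpDec j Ns (Finset.Icc 1 N \ F.1)) = Wnum j Ns := by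
    intro F
    apply sharpDec_card j Ns hNs
    rw [Finset.card_sdiff_of_subset F.2.1, hIcc, F.2.2]
    omega
  rw [key, nat_card_sigma]
  simp only [hfib]
  rw [Finset.sum_const, Finset.card_univ, smul_eq_mul, ← Nat.card_eq_fintype_card,
    card_subsets, hIcc]
  -- now rational algebra
  have hsum : N - N0 = ∑ i, Ns i := by omega
  rw [Nat.cast_mul, wnum_cast j Ns hNs, Nat.cast_choose ℚ hNN0, hsum]
  have h0 : ((N0.factorial : ℚ)) ≠ 0 := Nat.cast_ne_zero.2 (Nat.factorial_ne_zero _)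
  have hS : ((Nat.factorial (∑ i, Ns i) : ℚ)) ≠ 0 := Nat.cast_ne_zero.2 (Nat.factorial_ne_zero _)
  have hP : (∏ i : Fin j, (Nat.factorial (Ns i - 1) : ℚ)) ≠ 0 := prod_fact_ne_zero _
  rw [← mul_assoc]
  congr 1
  field_simp
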